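/- Let P_1(X) = Σ_{i=0}^{M−1} a_i X^{M−1−i} and P_2(X) = Σ_{i=0}^{N−1} b_i X^{N−1−i} be nonconstant polynomials over ℤ with |a_i| < H^{i+σ} and |b_i| < H^{i+θ} for all i, where H ≥ 2 and σ, θ ≥ 0. Then |Res(P_1, P_2)| ≤ C(M, N) · H^{(M−1+σ)(N−1+θ) − θσ} for some constant C(M, N) depending only on M and N. -/

import Mathlib

open Polynomial Matrix

/-- The Sylvester matrix of two polynomials `f`, `g` over a commutative ring. -/
def sylvesterMatrix {R : Type*} [CommRing R] (f g : Polynomial R) :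
    Matrix (Fin (f.natDegree + g.natDegree)) (Fin (f.natDegree + g.natDegree)) R :=
  Matrix.of fun i j =>
    if (i : ℕ) < g.natDegree then
      (if (i : ℕ) ≤ (j : ℕ) ∧ (j : ℕ) ≤ (i : ℕ) + f.natDegree then
        f.coeff (f.natDegree + i - j) else 0)
    else
      (if (i : ℕ) - g.natDegree ≤ (j : ℕ) ∧ (j : ℕ) ≤ (i : ℕ) - g.natDegree + g.natDegree then
        g.coeff (g.natDegree + ((i : ℕ) - g.natDegree) - j) else 0)

/-- The resultant of two polynomials: the determinant of their Sylvester matrix. -/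
def resultant {R : Type*} [CommRing R] (f g : Polynomial R) : R :=
  (sylvesterMatrix f g).det

private lemma rpow_finset_sum {α : Type*} (H : ℝ) (h : 0 < H) (s : Finset α) (f : α → ℝ) :
    H ^ (∑ i ∈ s, f i) = ∏ i ∈ s, H ^ f i := by
  classical
  induction s using Finset.induction with
  | empty => simp
  | insert _ _ hx ih =>
    rw [Finset.sum_insert hx, Finset.prod_insert hx, Real.rpow_add h, ih]

/-- Resultant bound of Bourgain–Garaev–Konyagin–Shparlinski: if
`P₁ = Σ_{i<M} a_i X^{M-1-i}`, `P₂ = Σ_{i<N} b_i X^{N-1-i}` are nonconstant with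
`|a_i| < H^{i+σ}`, `|b_i| < H^{i+θ}`, then
`|Res(P₁,P₂)| ≤ C(M,N) · H^{(M-1+σ)(N-1+θ) - θσ}`. -/
theorem resultant_bound (M N : ℕ) (hM : 1 ≤ M) (hN : 1 ≤ N) :
    ∃ K : ℝ, 0 < K ∧ ∀ (H σ θ : ℝ), 2 ≤ H → 0 ≤ σ → 0 ≤ θ →
      ∀ a b : ℕ → ℤ,
      (∀ i < M, |(a i : ℝ)| < H ^ ((i : ℝ) + σ)) →
      (∀ i < N, |(b i : ℝ)| < H ^ ((i : ℝ) + θ)) →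
      ∀ P₁ P₂ : Polynomial ℤ,
        P₁ = ∑ i ∈ Finset.range M, C (a i) * X ^ (M - 1 - i) →
        P₂ = ∑ i ∈ Finset.range N, C (b i) * X ^ (N - 1 - i) →
        0 < P₁.natDegree → 0 < P₂.natDegree →
        |((_root_.resultant P₁ P₂ : ℤ) : ℝ)| ≤
          K * H ^ (((M : ℝ) - 1 + σ) * ((N : ℝ) - 1 + θ) - θ * σ) := by
  classical
  refine ⟨(Nat.factorial (M + N) : ℝ), by positivity, ?_⟩
  intro H σ θ hH hσ hθ a b ha hb P₁ P₂ hP₁ hP₂ hd₁ hd₂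
  have hH0 : (0:ℝ) < H := by linarith
  have hH1 : (1:ℝ) ≤ H := by linarith
  set m := P₁.natDegree with hmdef
  set n := P₂.natDegree with hndef
  -- degree bounds
  have hmM : m ≤ M - 1 := by
    rw [hmdef, hP₁]
    refine natDegree_sum_le_of_forall_le _ _ fun i hi => ?_
    exact le_trans (natDegree_C_mul_X_pow_le _ _) (by omega)
  have hnN : n ≤ N - 1 := by
    rw [hndef, hP₂]
    refine natDegree_sum_le_of_forall_le _ _ fun i hi => ?_
    exact le_trans (natDegree_C_mul_X_pow_le _ _) (by omega)
  -- coefficient formulas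
  have hc1 : ∀ k, k ≤ M - 1 → P₁.coeff k = a (M - 1 - k) := by
    intro k hk
    rw [hP₁, finset_sum_coeff]
    rw [Finset.sum_eq_single (M - 1 - k)]
    · rw [coeff_C_mul, coeff_X_pow, if_pos (by omega), mul_one]
    · intro i hi hne
      simp only [Finset.mem_range] at hi
      rw [coeff_C_mul, coeff_X_pow, if_neg (by omega), mul_zero]
    · intro hmem; exact absurd (Finset.mem_range.mpr (by omega)) hmem
  have hc2 : ∀ k, k ≤ N - 1 → P₂.coeff k = b (N - 1 - k) := by
    intro k hk
    rw [hP₂, finset_sum_coeff]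
    rw [Finset.sum_eq_single (N - 1 - k)]
    · rw [coeff_C_mul, coeff_X_pow, if_pos (by omega), mul_one]
    · intro i hi hne
      simp only [Finset.mem_range] at hi
      rw [coeff_C_mul, coeff_X_pow, if_neg (by omega), mul_zero]
    · intro hmem; exact absurd (Finset.mem_range.mpr (by omega)) hmem
  -- the exponent function
  set c : ℕ → ℝ := fun i =>
    if i < n then (M:ℝ) - 1 - m + σ - i else (N:ℝ) - 1 - n + θ - ((i:ℝ) - n) with hcdef
  -- entry bound
  have key : ∀ i j : Fin (m + n),
      |((sylvesterMatrix P₁ P₂ i j : ℤ) : ℝ)| ≤ H ^ (c (i:ℕ) + ((j:ℕ):ℝ)) := by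
    intro i j
    have hpos : (0:ℝ) < H ^ (c (i:ℕ) + ((j:ℕ):ℝ)) := Real.rpow_pos_of_pos hH0 _
    unfold sylvesterMatrix
    rw [Matrix.of_apply]
    simp only [← hmdef, ← hndef]
    split_ifs with h1 h2 h2
    · -- i < n, entry from P₁
      set k := m + (i:ℕ) - (j:ℕ) with hk
      have hkM : k ≤ M - 1 := le_trans (by omega) hmM
      rw [hc1 k hkM]
      have hlt := ha (M - 1 - k) (by omega)
      refine le_of_lt (lt_of_lt_of_le hlt (le_of_eq ?_))
      congr 1
      have e1 : ((M - 1 - k : ℕ):ℝ) + (k:ℝ) + 1 = (M:ℝ) := by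
        exact_mod_cast congrArg (Nat.cast : ℕ → ℝ) (by omega : (M - 1 - k) + k + 1 = M)
      have e2 : (k:ℝ) + ((j:ℕ):ℝ) = (m:ℝ) + ((i:ℕ):ℝ) := by
        exact_mod_cast congrArg (Nat.cast : ℕ → ℝ) (by omega : k + (j:ℕ) = m + (i:ℕ))
      simp only [hcdef]
      rw [if_pos h1]
      linarith
    · simpa using hpos.le
    · -- i ≥ n, entry from P₂
      set k := n + ((i:ℕ) - n) - (j:ℕ) with hk
      have hkN : k ≤ N - 1 := le_trans (by omega) hnN
      rw [hc2 k hkN]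
      have hlt := hb (N - 1 - k) (by omega)
      refine le_of_lt (lt_of_lt_of_le hlt (le_of_eq ?_))
      congr 1
      have e1 : ((N - 1 - k : ℕ):ℝ) + (k:ℝ) + 1 = (N:ℝ) := by
        exact_mod_cast congrArg (Nat.cast : ℕ → ℝ) (by omega : (N - 1 - k) + k + 1 = N)
      have e2 : (k:ℝ) + ((j:ℕ):ℝ) = (n:ℝ) + ((((i:ℕ) - n : ℕ)):ℝ) := by
        exact_mod_cast congrArg (Nat.cast : ℕ → ℝ)
          (by omega : k + (j:ℕ) = n + ((i:ℕ) - n))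
      have e3 : ((((i:ℕ) - n : ℕ)):ℝ) + (n:ℝ) = ((i:ℕ):ℝ) := by
        exact_mod_cast congrArg (Nat.cast : ℕ → ℝ) (by omega : ((i:ℕ) - n) + n = (i:ℕ))
      simp only [hcdef]
      rw [if_neg h1]
      linarith
    · simpa using hpos.le
  -- the exponent sum
  set S : ℝ := (∑ i ∈ Finset.range (m + n), c i) + (∑ i ∈ Finset.range (m + n), (i:ℝ))
    with hSdef
  have hS : S = n * ((M:ℝ) - 1 - m + σ) + m * ((N:ℝ) - 1 - n + θ) + n * m := by
    have hsplit : ∀ f : ℕ → ℝ, (∑ i ∈ Finset.range (m + n), f i)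
        = (∑ i ∈ Finset.range n, f i) + (∑ i ∈ Finset.range m, f (n + i)) := by
      intro f
      rw [show m + n = n + m by omega, Finset.sum_range_add]
    have hA1 : (∑ i ∈ Finset.range n, c i)
        = ∑ i ∈ Finset.range n, ((M:ℝ) - 1 - m + σ - i) :=
      Finset.sum_congr rfl fun i hi => by
        simp only [hcdef]; rw [if_pos (Finset.mem_range.mp hi)]
    have hB1 : (∑ i ∈ Finset.range m, c (n + i))
        = ∑ i ∈ Finset.range m, ((N:ℝ) - 1 - n + θ - i) :=
      Finset.sum_congr rfl fun i hi => by
        simp only [hcdef]; rw [if_neg (by omega)]; push_cast; ring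
    have hC1 : (∑ i ∈ Finset.range m, ((n + i : ℕ):ℝ))
        = ∑ i ∈ Finset.range m, ((n:ℝ) + i) :=
      Finset.sum_congr rfl fun i hi => by push_cast; ring
    rw [hSdef, hsplit c, hsplit (fun i => (i:ℝ)), hA1, hB1, hC1]
    simp only [Finset.sum_sub_distrib, Finset.sum_add_distrib, Finset.sum_const,
      Finset.card_range, nsmul_eq_mul]
    ring
  -- determinant bound
  have hdet : |((_root_.resultant P₁ P₂ : ℤ):ℝ)| ≤ (Nat.factorial (m + n) : ℝ) * H ^ S := by
    have hmap : ((_root_.resultant P₁ P₂ : ℤ):ℝ)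
        = ((sylvesterMatrix P₁ P₂).map (fun x : ℤ => (x:ℝ))).det := by
      rw [_root_.resultant]
      exact RingHom.map_det (Int.castRingHom ℝ) _
    rw [hmap, Matrix.det_apply]
    set B := (sylvesterMatrix P₁ P₂).map (fun x : ℤ => (x:ℝ)) with hBdef
    calc |∑ π : Equiv.Perm (Fin (m + n)), Equiv.Perm.sign π • ∏ i, B (π i) i|
        ≤ ∑ π : Equiv.Perm (Fin (m + n)), |Equiv.Perm.sign π • ∏ i, B (π i) i| :=
          Finset.abs_sum_le_sum_abs _ _
      _ ≤ ∑ _π : Equiv.Perm (Fin (m + n)), H ^ S := by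
          refine Finset.sum_le_sum fun π _ => ?_
          have habs : |Equiv.Perm.sign π • ∏ i, B (π i) i| = |∏ i, B (π i) i| := by
            rcases Int.units_eq_one_or (Equiv.Perm.sign π) with h | h <;>
              simp [h, Units.smul_def, abs_neg]
          rw [habs, Finset.abs_prod]
          have hle : ∀ i : Fin (m + n), |B (π i) i| ≤ H ^ (c ((π i:Fin (m+n)):ℕ) + ((i:ℕ):ℝ)) := by
            intro i
            simpa [hBdef, Matrix.map_apply] using key (π i) i
          calc (∏ i, |B (π i) i|)
              ≤ ∏ i : Fin (m + n), H ^ (c ((π i:Fin (m+n)):ℕ) + ((i:ℕ):ℝ)) :=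
                Finset.prod_le_prod (fun i _ => abs_nonneg _) (fun i _ => hle i)
            _ = H ^ (∑ i : Fin (m + n), (c ((π i:Fin (m+n)):ℕ) + ((i:ℕ):ℝ))) :=
                (rpow_finset_sum H hH0 _ _).symm
            _ = H ^ S := by
                congr 1
                rw [Finset.sum_add_distrib, hSdef]
                congr 1
                · rw [Equiv.sum_comp π (fun i : Fin (m + n) => c (i:ℕ))]
                  exact Fin.sum_univ_eq_sum_range (fun i => c i) (m + n)
                · exact Fin.sum_univ_eq_sum_range (fun i => (i:ℝ)) (m + n)
      _ = (Nat.factorial (m + n) : ℝ) * H ^ S := by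
          rw [Finset.sum_const, Finset.card_univ, Fintype.card_perm, Fintype.card_fin,
            nsmul_eq_mul]
  -- compare exponents and factorials
  have hm' : (m:ℝ) + 1 ≤ (M:ℝ) := by exact_mod_cast (by omega : m + 1 ≤ M)
  have hn' : (n:ℝ) + 1 ≤ (N:ℝ) := by exact_mod_cast (by omega : n + 1 ≤ N)
  have hSE : S ≤ ((M:ℝ) - 1 + σ) * ((N:ℝ) - 1 + θ) - θ * σ := by
    rw [hS]
    nlinarith [mul_nonneg (by linarith : (0:ℝ) ≤ (M:ℝ) - 1 - m)
        (by linarith : (0:ℝ) ≤ (N:ℝ) - 1 - n),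
      mul_nonneg hθ (by linarith : (0:ℝ) ≤ (M:ℝ) - 1 - m),
      mul_nonneg hσ (by linarith : (0:ℝ) ≤ (N:ℝ) - 1 - n)]
  have hfac : (Nat.factorial (m + n) : ℝ) ≤ (Nat.factorial (M + N) : ℝ) := by
    exact_mod_cast Nat.factorial_le (by omega)
  refine le_trans hdet (mul_le_mul hfac (Real.rpow_le_rpow_of_exponent_le hH1 hSE)
    (Real.rpow_pos_of_pos hH0 _).le (by positivity))
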